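/- If δ > 0, S ⊆ ℤ is measure expanding, E ⊆ ℤ is a set of δ-recurrence, and B ⊆ ℤ is a Bohr set Bohr(α,η) for some d ∈ ℕ, α ∈ 𝕋^d and η > 0, then S ∩ (E + B) is a set of δ-recurrence, where E + B := {e + b : e ∈ E, b ∈ B}. -/

import Mathlib

/-- A measure preserving system: a probability space `(X, μ)` together with an
invertible measure preserving transformation `T : X → X`. -/
structure MPSystem where
  X : Type
  [mX : MeasurableSpace X]
  μ : MeasureTheory.Measure X
  prob : MeasureTheory.IsProbabilityMeasure μ
  T : X ≃ᵐ X
  mp : MeasureTheory.MeasurePreserving T μ μ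

attribute [instance] MPSystem.mX

open MeasureTheory Filter

namespace MPSystem

/-- The `n`-th iterate `Tⁿ` of the transformation, for `n : ℤ`. -/
def iter (𝒮 : MPSystem) (n : ℤ) : 𝒮.X → 𝒮.X :=
  fun x => ((𝒮.T.toEquiv : Equiv.Perm 𝒮.X) ^ n) x

/-- The system is ergodic: every measurable `D` with `μ(D △ T⁻¹D) = 0` has measure `0` or `1`. -/
def IsErgodic (𝒮 : MPSystem) : Prop :=
  ∀ D : Set 𝒮.X, MeasurableSet D → 𝒮.μ (symmDiff D (𝒮.T ⁻¹' D)) = 0 →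
    𝒮.μ D = 0 ∨ 𝒮.μ D = 1

/-- The product system `(X × X, μ × μ, T × T)`. -/
noncomputable def prod (𝒮 : MPSystem) : MPSystem where
  X := 𝒮.X × 𝒮.X
  μ := 𝒮.μ.prod 𝒮.μ
  prob := by have := 𝒮.prob; infer_instance
  T := 𝒮.T.prodCongr 𝒮.T
  mp := by have := 𝒮.prob; exact 𝒮.mp.prod 𝒮.mp

/-- The system is weak mixing: the product system `(X×X, μ×μ, T×T)` is ergodic. -/
def WeakMixing (𝒮 : MPSystem) : Prop := 𝒮.prod.IsErgodic

/-- The system is nontrivial: some measurable `D` has `μ(D △ T⁻¹D) > 0`. -/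
def Nontrivial (𝒮 : MPSystem) : Prop :=
  ∃ D : Set 𝒮.X, MeasurableSet D ∧ 0 < 𝒮.μ (symmDiff D (𝒮.T ⁻¹' D))

end MPSystem

/-- `S ⊆ ℤ` is a set of recurrence: for every measure preserving system and every
measurable `D` with `μ(D) > 0`, there is `n ∈ S` with `μ(D ∩ TⁿD) > 0`. -/
def IsRecurrenceSet (S : Set ℤ) : Prop :=
  ∀ (𝒮 : MPSystem) (D : Set 𝒮.X), MeasurableSet D → 0 < 𝒮.μ D →
    ∃ n ∈ S, 0 < 𝒮.μ (D ∩ 𝒮.iter n '' D)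

/-- `S ⊆ ℤ` is measure expanding: every translate `S + m` is a set of recurrence. -/
def MeasureExpanding (S : Set ℤ) : Prop :=
  ∀ m : ℤ, IsRecurrenceSet ((fun s => s + m) '' S)

/-- `S` is a set of `δ`-recurrence: for every measure preserving system and every
measurable `D` with `μ(D) > δ`, there is `n ∈ S` with `μ(D ∩ TⁿD) > 0`. -/
def IsDeltaRecurrenceSet (δ : ℝ) (S : Set ℤ) : Prop :=
  ∀ (𝒮 : MPSystem) (D : Set 𝒮.X), MeasurableSet D → ENNReal.ofReal δ < 𝒮.μ D →
    ∃ n ∈ S, 0 < 𝒮.μ (D ∩ 𝒮.iter n '' D)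

/-- `S` (an infinite set) is a set of rigidity for the system `𝒮`:
for every measurable `D` and every `ε > 0`, `{n ∈ S : μ(D △ TⁿD) > ε}` is finite. -/
def IsRigiditySetFor (S : Set ℤ) (𝒮 : MPSystem) : Prop :=
  S.Infinite ∧ ∀ D : Set 𝒮.X, MeasurableSet D → ∀ ε : ℝ, 0 < ε →
    {n ∈ S | ENNReal.ofReal ε < 𝒮.μ (symmDiff D (𝒮.iter n '' D))}.Finite

/-- `S` is a set of strong recurrence. -/
def IsStrongRecurrenceSet (S : Set ℤ) : Prop :=
  ∀ (𝒮 : MPSystem) (D : Set 𝒮.X), MeasurableSet D → 0 < 𝒮.μ D →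
    ∃ c : ℝ, 0 < c ∧ {n ∈ S | ENNReal.ofReal c < 𝒮.μ (D ∩ 𝒮.iter n '' D)}.Infinite

/-- `S` is a set of strong recurrence for weak mixing systems. -/
def IsStrongRecurrenceSetForWeakMixing (S : Set ℤ) : Prop :=
  ∀ (𝒮 : MPSystem), 𝒮.WeakMixing → ∀ (D : Set 𝒮.X), MeasurableSet D → 0 < 𝒮.μ D →
    ∃ c : ℝ, 0 < c ∧ {n ∈ S | ENNReal.ofReal c < 𝒮.μ (D ∩ 𝒮.iter n '' D)}.Infinite

/-- The circle group `𝕋 = ℝ/ℤ`. -/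
abbrev 𝕋 : Type := UnitAddCircle

/-- The character `e : 𝕋 → S¹ ⊆ ℂ`, `e(x) = exp(2πi x̃)` where `x̃` is a real
representative of `x`. -/
noncomputable def e (x : 𝕋) : ℂ := (AddCircle.toCircle x : ℂ)

/-- A tuple `α ∈ 𝕋^d` is independent if the only integer solution of
`n₁α₁ + ⋯ + n_dα_d = 0` is `n₁ = ⋯ = n_d = 0`. -/
def IndepTuple {d : ℕ} (α : Fin d → 𝕋) : Prop :=
  ∀ n : Fin d → ℤ, (∑ j, n j • α j) = 0 → ∀ j, n j = 0

/-- The Bohr set `Bohr(α, η) = {n ∈ ℤ : max_j ‖nαⱼ‖ < η}`. -/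
def BohrSet {d : ℕ} (α : Fin d → 𝕋) (η : ℝ) : Set ℤ :=
  {n : ℤ | ∀ j, ‖n • α j‖ < η}

/-- The Bohr–Hamming neighborhood `BH(α; ε, η) = {n ∈ ℤ : #{j : ‖nαⱼ‖ < ε} ≥ (1-η)d}`. -/
def BHNbhd {d : ℕ} (α : Fin d → 𝕋) (ε η : ℝ) : Set ℤ :=
  {n : ℤ | (1 - η) * d ≤ ({j : Fin d | ‖n • α j‖ < ε}.ncard : ℝ)}

/-- The upper Banach density of `A ⊆ ℤ`:
`d*(A) = lim_k sup_n |A ∩ {n+1,…,n+k}|/k` (realized as a `limsup`). -/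
noncomputable def upperBanachDensity (A : Set ℤ) : ℝ :=
  Filter.limsup
    (fun k : ℕ => ⨆ n : ℤ, ((A ∩ Set.Icc (n + 1) (n + k)).ncard : ℝ) / k) Filter.atTop

namespace MPSystem

variable (𝒮 : MPSystem)

lemma iter_zero' : 𝒮.iter 0 = id := by
  funext x; simp [iter]

lemma iter_add_one' (n : ℤ) : 𝒮.iter (n + 1) = 𝒮.iter n ∘ 𝒮.T := by
  funext x
  simp only [iter, zpow_add_one, Equiv.Perm.mul_apply, Function.comp_apply]
  rfl

lemma iter_sub_one' (n : ℤ) : 𝒮.iter (n - 1) = 𝒮.iter n ∘ 𝒮.T.symm := by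
  funext x
  simp only [iter, zpow_sub_one, Equiv.Perm.mul_apply, Function.comp_apply]
  rfl

lemma iter_measurable' (n : ℤ) : Measurable (𝒮.iter n) := by
  induction n using Int.induction_on with
  | zero => rw [iter_zero']; exact measurable_id
  | succ k ih => rw [iter_add_one']; exact ih.comp 𝒮.T.measurable
  | pred k ih =>
      have : (-(k : ℤ) - 1) = (-(k : ℤ)) - 1 := rfl
      rw [this, iter_sub_one']; exact ih.comp 𝒮.T.symm.measurable

lemma iter_mp' (n : ℤ) : MeasurePreserving (𝒮.iter n) 𝒮.μ 𝒮.μ := by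
  induction n using Int.induction_on with
  | zero => rw [iter_zero']; exact MeasurePreserving.id _
  | succ k ih => rw [iter_add_one']; exact ih.comp 𝒮.mp
  | pred k ih =>
      have : (-(k : ℤ) - 1) = (-(k : ℤ)) - 1 := rfl
      rw [this, iter_sub_one']; exact ih.comp (𝒮.mp.symm 𝒮.T)

lemma iter_add' (a b : ℤ) : 𝒮.iter (a + b) = 𝒮.iter a ∘ 𝒮.iter b := by
  funext x
  simp only [iter, zpow_add, Equiv.Perm.mul_apply, Function.comp_apply]

lemma iter_image_eq_preimage' (n : ℤ) (D : Set 𝒮.X) :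
    𝒮.iter n '' D = 𝒮.iter (-n) ⁻¹' D := by
  have h1 : 𝒮.iter n = ⇑((𝒮.T.toEquiv : Equiv.Perm 𝒮.X) ^ n) := rfl
  have h2 : 𝒮.iter (-n) = ⇑((𝒮.T.toEquiv : Equiv.Perm 𝒮.X) ^ (-n)) := rfl
  rw [h1, h2, Equiv.image_eq_preimage_symm]
  congr 1
  rw [zpow_neg]
  rfl

lemma iter_image_measurable' (n : ℤ) {D : Set 𝒮.X} (hD : MeasurableSet D) :
    MeasurableSet (𝒮.iter n '' D) := by
  rw [iter_image_eq_preimage']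
  exact (𝒮.iter_measurable' (-n)) hD

/-- The product of two (possibly different) systems. -/
noncomputable def prod2 (𝒮 𝒯 : MPSystem) : MPSystem where
  X := 𝒮.X × 𝒯.X
  μ := 𝒮.μ.prod 𝒯.μ
  prob := by have := 𝒮.prob; have := 𝒯.prob; infer_instance
  T := 𝒮.T.prodCongr 𝒯.T
  mp := by have := 𝒮.prob; have := 𝒯.prob; exact 𝒮.mp.prod 𝒯.mp

lemma prod2_iter (𝒮 𝒯 : MPSystem) (n : ℤ) :
    (prod2 𝒮 𝒯).iter n = Prod.map (𝒮.iter n) (𝒯.iter n) := by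
  induction n using Int.induction_on with
  | zero => rw [iter_zero', iter_zero', iter_zero']; rfl
  | succ k ih =>
      rw [iter_add_one', iter_add_one', iter_add_one', ih]
      funext p
      rfl
  | pred k ih =>
      have h : (-(k : ℤ) - 1) = (-(k : ℤ)) - 1 := rfl
      rw [h, iter_sub_one', iter_sub_one', iter_sub_one', ih]
      funext p
      rfl

end MPSystem

/-- The rotation system on the `d`-torus given by `α`. -/
noncomputable def torusSystem (d : ℕ) (α : Fin d → 𝕋) : MPSystem where
  X := Fin d → 𝕋
  μ := volume
  prob := by
    have : IsProbabilityMeasure (volume : Measure 𝕋) := ⟨UnitAddCircle.measure_univ⟩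
    rw [volume_pi]; infer_instance
  T := { toEquiv := Equiv.addRight α
         measurable_toFun := measurable_add_const α
         measurable_invFun := by
           simpa [sub_eq_add_neg] using measurable_add_const (-α) }
  mp := measurePreserving_add_right volume α

lemma torusSystem_iter (d : ℕ) (α : Fin d → 𝕋) (n : ℤ) (y : Fin d → 𝕋) :
    (torusSystem d α).iter n y = y + n • α := by
  induction n using Int.induction_on generalizing y with
  | zero => rw [MPSystem.iter_zero']; simp; rfl
  | succ k ih =>
      rw [MPSystem.iter_add_one']
      have hT : (torusSystem d α).T y = y + α := rfl
      show (torusSystem d α).iter k ((torusSystem d α).T y) = _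
      rw [hT, ih (y + α)]
      have hsm : ((k : ℤ) + 1) • α = (k : ℤ) • α + α := by
        rw [add_zsmul, one_zsmul]
      rw [hsm]
      abel
  | pred k ih =>
      have h : (-(k : ℤ) - 1) = (-(k : ℤ)) - 1 := rfl
      rw [h, MPSystem.iter_sub_one']
      have hTs : (torusSystem d α).T.symm y = y - α := by
        show (Equiv.addRight α).symm y = y - α
        simp [sub_eq_add_neg]
      show (torusSystem d α).iter (-(k : ℤ)) ((torusSystem d α).T.symm y) = _
      rw [hTs, ih (y - α)]
      have hsm : ((-(k : ℤ)) - 1) • α = (-(k : ℤ)) • α - α := by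
        rw [sub_zsmul, one_zsmul]
        abel
      rw [hsm]
      generalize (-(k : ℤ)) • α = β
      abel

/-- **Corollary.** If `δ > 0`, `S` is measure expanding, `E` is a set of `δ`-recurrence,
and `B = Bohr(α,η)` is a Bohr set, then `S ∩ (E + B)` is a set of `δ`-recurrence. -/
theorem measureExpanding_inter_sumset_bohr_deltaRecurrence
    (δ : ℝ) (hδ : 0 < δ) (S E : Set ℤ) (hS : MeasureExpanding S)
    (hE : IsDeltaRecurrenceSet δ E) (d : ℕ) (α : Fin d → 𝕋) (η : ℝ) (hη : 0 < η) :
    IsDeltaRecurrenceSet δ (S ∩ Set.image2 (fun x y => x + y) E (BohrSet α η)) := by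
  intro 𝒮 D hD hμD
  haveI := 𝒮.prob
  -- Apply δ-recurrence of E
  obtain ⟨m, hmE, hm⟩ := hE 𝒮 D hD hμD
  set D' : Set 𝒮.X := D ∩ 𝒮.iter m '' D with hD'def
  have hD'meas : MeasurableSet D' := hD.inter (𝒮.iter_image_measurable' m hD)
  -- The torus system and small neighborhood U
  set 𝒯 := torusSystem d α with h𝒯
  haveI h𝒯prob : IsProbabilityMeasure 𝒯.μ := 𝒯.prob
  set U : Set (Fin d → 𝕋) := Set.univ.pi fun _ => Metric.ball 0 (η / 2) with hUdef
  have hUopen : IsOpen U := isOpen_set_pi Set.finite_univ fun j _ => Metric.isOpen_ball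
  have hUmeas : MeasurableSet U := hUopen.measurableSet
  have hUpos : 0 < 𝒯.μ U := by
    rw [show 𝒯.μ = (volume : Measure (Fin d → 𝕋)) from rfl]
    refine hUopen.measure_pos _ ⟨0, fun j _ => ?_⟩
    simpa using half_pos hη
  -- Product system
  set PS := MPSystem.prod2 𝒮 𝒯 with hPS
  have hPSμ : PS.μ = 𝒮.μ.prod 𝒯.μ := rfl
  have hprod_meas : MeasurableSet (D' ×ˢ U : Set (𝒮.X × 𝒯.X)) := hD'meas.prod hUmeas
  haveI : SigmaFinite 𝒯.μ := inferInstance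
  have hprod_pos : 0 < PS.μ (D' ×ˢ U) := by
    have h1 : PS.μ (D' ×ˢ U) = 𝒮.μ D' * 𝒯.μ U := Measure.prod_prod (ν := 𝒯.μ) D' U
    rw [h1]
    exact ENNReal.mul_pos hm.ne' hUpos.ne'
  -- Apply measure-expandingness of S with translate -m
  obtain ⟨k, hkmem, hk⟩ := hS (-m) PS (D' ×ˢ U) hprod_meas hprod_pos
  obtain ⟨s, hsS, hks⟩ := hkmem
  -- Split the product measure positivity
  have himg : PS.iter k '' (D' ×ˢ U) = (𝒮.iter k '' D') ×ˢ (𝒯.iter k '' U) := by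
    rw [MPSystem.prod2_iter]
    exact Set.prod_image_image_eq.symm
  rw [himg] at hk
  replace hk : 0 < (𝒮.μ.prod 𝒯.μ) ((D' ∩ 𝒮.iter k '' D') ×ˢ (U ∩ 𝒯.iter k '' U)) := by
    rw [← Set.prod_inter_prod]; exact hk
  have hk' := lt_of_lt_of_eq hk (Measure.prod_prod _ _)
  have hk1 : 0 < 𝒮.μ (D' ∩ 𝒮.iter k '' D') := by
    rcases (CanonicallyOrderedAdd.mul_pos).mp hk' with ⟨h1, _⟩
    exact h1
  have hk2 : 0 < 𝒯.μ (U ∩ 𝒯.iter k '' U) := by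
    rcases (CanonicallyOrderedAdd.mul_pos).mp hk' with ⟨_, h2⟩
    exact h2
  -- From the torus factor: k is in the Bohr set
  obtain ⟨y, hyU, u, huU, huy⟩ := MeasureTheory.nonempty_of_measure_ne_zero hk2.ne'
  let y' : Fin d → 𝕋 := y
  let u' : Fin d → 𝕋 := u
  have hyU' : y' ∈ U := hyU
  have huU' : u' ∈ U := huU
  have huy' : u' + (k : ℤ) • α = y' := by
    have h1 : (torusSystem d α).iter k u' = u' + (k : ℤ) • α := torusSystem_iter d α k u'
    rw [← h1]
    exact huy
  have hkBohr : k ∈ BohrSet α η := by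
    intro j
    have hyj : ‖y' j‖ < η / 2 := by
      have := hyU' j (Set.mem_univ j)
      simpa [mem_ball_zero_iff] using this
    have huj : ‖u' j‖ < η / 2 := by
      have := huU' j (Set.mem_univ j)
      simpa [mem_ball_zero_iff] using this
    have hα : (k : ℤ) • α j = y' j - u' j := by
      have := congrFun huy' j
      simp only [Pi.add_apply, Pi.smul_apply] at this
      exact eq_sub_of_add_eq' this
    rw [hα]
    calc ‖y' j - u' j‖ ≤ ‖y' j‖ + ‖u' j‖ := norm_sub_le _ _
      _ < η / 2 + η / 2 := add_lt_add hyj huj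
      _ = η := add_halves η
  -- Conclude with n = k + m
  refine ⟨k + m, ⟨?_, ?_⟩, ?_⟩
  · have hks' : s + -m = k := hks
    have : k + m = s := by omega
    rw [this]; exact hsS
  · exact ⟨m, hmE, k, hkBohr, by ring⟩
  · have hsub : D' ∩ 𝒮.iter k '' D' ⊆ D ∩ 𝒮.iter (k + m) '' D := by
      intro x hx
      refine ⟨hx.1.1, ?_⟩
      have h1 : 𝒮.iter k '' D' ⊆ 𝒮.iter k '' (𝒮.iter m '' D) :=
        Set.image_mono Set.inter_subset_right
      have h2 : 𝒮.iter k '' (𝒮.iter m '' D) = 𝒮.iter (k + m) '' D := by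
        rw [MPSystem.iter_add', Set.image_comp]
      exact h2 ▸ h1 hx.2
    exact lt_of_lt_of_le hk1 (measure_mono hsub)
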